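/- There is an absolute constant C > 0 with the following property. For every DAG G on n ≥ 2 vertices and every set 𝒞 of pairwise vertex-disjoint chains of G, there exists a set H ⊆ TC(G) with |H| ≤ C · n · (1 + log* n) such that for every chain C ∈ 𝒞 and all vertices u, v ∈ C with u occurring before v on C, dist_{G∪H}(u, v) ≤ 4. -/

import Mathlib

open scoped Classical

/-- An edge of a directed graph on vertex set `Fin n`. -/
abbrev Edge (n : ℕ) := Fin n × Fin n

/-- `l` is a directed path in the graph with edge set `E`:
a sequence of distinct vertices, each consecutive pair joined by an edge. -/
def IsPathList {n : ℕ} (E : Set (Edge n)) (l : List (Fin n)) : Prop :=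
  l.Nodup ∧ l.Chain' (fun a b => (a, b) ∈ E)

/-- `l` is a directed path from `u` to `v` in the graph with edge set `E`. -/
def IsPathFromTo {n : ℕ} (E : Set (Edge n)) (u v : Fin n) (l : List (Fin n)) : Prop :=
  IsPathList E l ∧ l.head? = some u ∧ l.getLast? = some v

/-- `hdist E u v` is the minimum number of edges on a directed path from `u` to `v`
(`⊤` if no such path exists). -/
noncomputable def hdist {n : ℕ} (E : Set (Edge n)) (u v : Fin n) : ℕ∞ :=
  sInf {k : ℕ∞ | ∃ l : List (Fin n), IsPathFromTo E u v l ∧ (l.length : ℕ∞) = k + 1}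

/-- `(u, v)` is in the transitive closure: `u ≠ v` and `v` is reachable from `u`. -/
def TCrel {n : ℕ} (E : Set (Edge n)) (u v : Fin n) : Prop :=
  u ≠ v ∧ ∃ l : List (Fin n), IsPathFromTo E u v l

/-- The transitive closure of the graph with edge set `E`, as a set of pairs. -/
def TCset {n : ℕ} (E : Set (Edge n)) : Set (Edge n) := {p | TCrel E p.1 p.2}

/-- `H` is a shortcut set with hopbound `β` for the graph with edge set `E`. -/
def IsShortcutSet {n : ℕ} (E H : Set (Edge n)) (β : ℕ) : Prop :=
  H ⊆ TCset E ∧ ∀ p ∈ TCset E, hdist (E ∪ H) p.1 p.2 ≤ (β : ℕ∞)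

/-- Reachability in the graph with edge set `E`. -/
def Reaches {n : ℕ} (E : Set (Edge n)) (u v : Fin n) : Prop :=
  Relation.ReflTransGen (fun a b => (a, b) ∈ E) u v

/-- A DAG: a directed graph with no directed cycles. -/
def IsDAG {n : ℕ} (E : Set (Edge n)) : Prop :=
  ∀ u v : Fin n, (u, v) ∈ E → ¬ Reaches E v u

/-- The iterated base-2 logarithm `log* x`: the least `k ≥ 0` such that applying
`log₂` to `x` a total of `k` times yields a value at most `1`. -/
noncomputable def logStar (x : ℝ) : ℕ :=
  sInf {k : ℕ | (fun y => Real.logb 2 y)^[k] x ≤ 1}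

/-- A chain: a sequence of distinct vertices each consecutive pair of which
lies in the transitive closure. -/
def IsChainIn {n : ℕ} (E : Set (Edge n)) (C : List (Fin n)) : Prop :=
  C.Nodup ∧ C.Chain' (fun a b => TCrel E a b)


namespace LS

lemma clog_lt_self {m : ℕ} (hm : 2 ≤ m) : Nat.clog 2 m < m := by
  have h1 : m ≤ 2 ^ (m - 1) := by
    have := Nat.lt_two_pow_self (n := m - 1)
    omega
  have h2 : Nat.clog 2 m ≤ m - 1 := by
    have := (Nat.clog_le_iff_le_pow (by norm_num : (1:ℕ) < 2) (x := m) (y := m - 1)).mpr h1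
    exact this
  omega

lemma logStar_set_nonempty (x : ℝ) : {k : ℕ | (fun y => Real.logb 2 y)^[k] x ≤ 1}.Nonempty := by
  set f : ℝ → ℝ := fun y => Real.logb 2 y with hf
  suffices h : ∀ n : ℕ, ∀ x : ℝ, x ≤ n → ∃ k, f^[k] x ≤ 1 by
    rcases le_or_gt x 1 with hx | hx
    · exact ⟨0, by simpa using hx⟩
    · obtain ⟨k, hk⟩ := h ⌈x⌉₊ x (Nat.le_ceil x)
      exact ⟨k, hk⟩
  intro n
  induction n using Nat.strong_induction_on with
  | _ n ih =>
    intro x hx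
    rcases le_or_gt x 1 with h1 | h1
    · exact ⟨0, by simpa using h1⟩
    rcases le_or_gt x 2 with h2 | h2
    · refine ⟨1, ?_⟩
      have : f x ≤ Real.logb 2 2 :=
        Real.logb_le_logb_of_le (by norm_num) (by linarith) h2
      simpa [Real.logb_self_eq_one] using this
    · -- 2 < x ≤ n, so n ≥ 3
      have hn3 : 3 ≤ n := by
        by_contra h
        push_neg at h
        interval_cases n <;> simp_all <;> linarith [hx]
      have hfx : f x ≤ (n - 1 : ℕ) := by
        have hxn : x ≤ ((n:ℝ)) := hx
        have h2n : (n : ℝ) ≤ 2 ^ (n - 1) := by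
          have : n ≤ 2 ^ (n - 1) := by
            have := Nat.lt_two_pow_self (n := n - 1)
            omega
          exact_mod_cast this
        have hlog : f x ≤ Real.logb 2 ((2:ℝ) ^ (n-1)) := by
          apply Real.logb_le_logb_of_le (by norm_num) (by linarith)
          linarith
        rwa [Real.logb_pow, Real.logb_self_eq_one (by norm_num), mul_one] at hlog
      obtain ⟨k, hk⟩ := ih (n - 1) (by omega) (f x) hfx
      exact ⟨k + 1, by simpa [Function.iterate_succ_apply] using hk⟩

lemma logStar_eq_zero {x : ℝ} (hx : x ≤ 1) : logStar x = 0 := by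
  unfold logStar
  rw [Nat.sInf_eq_zero]
  left; simpa using hx

lemma logStar_pos {x : ℝ} (hx : 1 < x) : 1 ≤ logStar x := by
  unfold logStar
  rcases Nat.eq_zero_or_pos (sInf {k : ℕ | (fun y => Real.logb 2 y)^[k] x ≤ 1}) with h | h
  · exfalso
    rw [Nat.sInf_eq_zero] at h
    rcases h with h | h
    · simp only [Set.mem_setOf_eq, Function.iterate_zero_apply] at h; linarith
    · exact absurd h (Set.nonempty_iff_ne_empty.mp (logStar_set_nonempty x))
  · exact h

lemma logStar_le_one {x : ℝ} (hx0 : 0 < x) (hx : x ≤ 2) : logStar x ≤ 1 := by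
  apply Nat.sInf_le
  have : Real.logb 2 x ≤ Real.logb 2 2 := Real.logb_le_logb_of_le (by norm_num) hx0 hx
  simpa [Real.logb_self_eq_one] using this

lemma logStar_shift {x : ℝ} (hx : 2 < x) : logStar x = logStar (Real.logb 2 x) + 1 := by
  set f : ℝ → ℝ := fun y => Real.logb 2 y with hf
  have hKx := logStar_set_nonempty x
  have hKfx := logStar_set_nonempty (f x)
  set s := logStar x with hs
  set t := logStar (f x) with ht
  have hsmem : f^[s] x ≤ 1 := Nat.sInf_mem hKx
  have htmem : f^[t] (f x) ≤ 1 := Nat.sInf_mem hKfx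
  have hs1 : 1 ≤ s := logStar_pos (by linarith)
  have h1 : t ≤ s - 1 := by
    apply Nat.sInf_le
    show f^[s-1] (f x) ≤ 1
    have e : f^[s-1] (f x) = f^[s-1+1] x := (Function.iterate_succ_apply f (s-1) x).symm
    have e2 : s - 1 + 1 = s := by omega
    rw [e, e2]; exact hsmem
  have h2 : s ≤ t + 1 := by
    apply Nat.sInf_le
    show f^[t+1] x ≤ 1
    rw [Function.iterate_succ_apply]; exact htmem
  omega

lemma logb2_ge_one {x : ℝ} (hx : 2 ≤ x) : 1 ≤ Real.logb 2 x := by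
  have : Real.logb 2 2 ≤ Real.logb 2 x := Real.logb_le_logb_of_le (by norm_num) (by norm_num) hx
  simpa [Real.logb_self_eq_one] using this

lemma logStar_mono_aux : ∀ v : ℕ, ∀ x y : ℝ, 1 ≤ x → x ≤ y → logStar y = v → logStar x ≤ v := by
  intro v
  induction v using Nat.strong_induction_on with
  | _ v ih =>
    intro x y hx hxy hv
    rcases le_or_gt x 2 with h2 | h2
    · rcases Nat.eq_zero_or_pos v with h0 | h0
      · subst h0
        have hmem := Nat.sInf_mem (logStar_set_nonempty y)
        unfold logStar at hv
        rw [hv] at hmem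
        simp only [Set.mem_setOf_eq, Function.iterate_zero_apply] at hmem
        have this := hmem
        have : x ≤ 1 := le_trans hxy this
        simp [logStar_eq_zero this]
      · calc logStar x ≤ 1 := logStar_le_one (by linarith) h2
          _ ≤ v := h0
    · have hy2 : 2 < y := lt_of_lt_of_le h2 hxy
      have hsx := logStar_shift h2
      have hsy := logStar_shift hy2
      have hv1 : 1 ≤ v := by omega
      have hfx1 : 1 ≤ Real.logb 2 x := logb2_ge_one (le_of_lt h2)
      have hfxy : Real.logb 2 x ≤ Real.logb 2 y :=
        Real.logb_le_logb_of_le (by norm_num) (by linarith) hxy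
      have := ih (v - 1) (by omega) (Real.logb 2 x) (Real.logb 2 y) hfx1 hfxy (by omega)
      omega

lemma logStar_mono {x y : ℝ} (hx : 1 ≤ x) (hxy : x ≤ y) : logStar x ≤ logStar y :=
  logStar_mono_aux (logStar y) x y hx hxy rfl

/-- Key lemma: for natural `k ≥ 2` and real `x > k - 1`, `logStar k ≤ logStar x`. -/
lemma logStar_nat_le : ∀ k : ℕ, 2 ≤ k → ∀ x : ℝ, (k:ℝ) - 1 < x → logStar (k:ℝ) ≤ logStar x := by
  intro k
  induction k using Nat.strong_induction_on with
  | _ k ih =>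
    intro hk2 x hx
    rcases eq_or_lt_of_le hk2 with h2 | h3
    · -- k = 2
      have hk : k = 2 := h2.symm
      subst hk
      have h2R : ((2:ℕ):ℝ) = 2 := by norm_num
      rw [h2R]
      have hle : logStar (2:ℝ) ≤ 1 := logStar_le_one (by norm_num) le_rfl
      have hx1 : 1 < x := by
        rw [h2R] at hx; linarith
      have := logStar_pos hx1
      omega
    · -- k ≥ 3
      have hk3 : 3 ≤ k := h3
      have hkR : (2:ℝ) < (k:ℝ) := by exact_mod_cast (by omega : 2 < k)
      have hx2 : 2 < x := by
        have h3R : (3:ℝ) ≤ (k:ℝ) := by exact_mod_cast hk3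
        linarith
      rw [logStar_shift hkR, logStar_shift hx2]
      set k' := Nat.clog 2 k with hk'
      have hk'2 : 2 ≤ k' := by
        have h1 : Nat.clog 2 3 ≤ k' := Nat.clog_mono_right 2 (by omega)
        have h3' : Nat.clog 2 3 = 2 := by norm_num [Nat.clog]
        omega
      have hk'lt : k' < k := clog_lt_self (by omega)
      have hpow : 2 ^ (k' - 1) < k := by
        have := Nat.pow_pred_clog_lt_self (by norm_num : (1:ℕ) < 2) (by omega : 1 < k)
        simpa [hk', Nat.pred_eq_sub_one] using this
      have hnat : (2:ℕ)^(k'-1) ≤ k - 1 := by omega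
      have hR : (((2:ℕ)^(k'-1) : ℕ) : ℝ) ≤ ((k-1 : ℕ) : ℝ) := Nat.cast_le.mpr hnat
      have hk1R : ((k-1:ℕ):ℝ) = (k:ℝ) - 1 := by
        push_cast [Nat.cast_sub (by omega : 1 ≤ k)]; ring
      have hpow2 : (((2:ℕ)^(k'-1) : ℕ) : ℝ) = (2:ℝ)^(k'-1) := by push_cast; ring
      have hlt : (2:ℝ)^(k'-1) < x := by
        rw [← hpow2]; rw [hk1R] at hR; linarith
      have hlogb : ((k'-1:ℕ):ℝ) < Real.logb 2 x := by
        have hpos : (0:ℝ) < (2:ℝ)^(k'-1) := by positivity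
        have := Real.logb_lt_logb (by norm_num : (1:ℝ) < 2) hpos hlt
        have heq : Real.logb 2 ((2:ℝ)^(k'-1)) = ((k'-1:ℕ):ℝ) := by
          rw [Real.logb_pow, Real.logb_self_eq_one (by norm_num)]; ring
        rw [heq] at this; exact this
      have hk'1R : ((k'-1:ℕ):ℝ) = (k':ℝ) - 1 := by
        push_cast [Nat.cast_sub (by omega : 1 ≤ k')]; ring
      have hfk1 : 1 ≤ Real.logb 2 (k:ℝ) := logb2_ge_one (by linarith)
      have hlek' : Real.logb 2 (k:ℝ) ≤ (k':ℝ) := by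
        have hle : k ≤ 2 ^ k' := Nat.le_pow_clog (by norm_num) k
        have hleR : (k:ℝ) ≤ (2:ℝ)^k' := by exact_mod_cast hle
        have := Real.logb_le_logb_of_le (by norm_num : (1:ℝ) < 2) (by linarith) hleR
        have heq : Real.logb 2 ((2:ℝ)^k') = (k':ℝ) := by
          rw [Real.logb_pow, Real.logb_self_eq_one (by norm_num)]; ring
        rwa [heq] at this
      have step1 : logStar (Real.logb 2 (k:ℝ)) ≤ logStar (k':ℝ) := logStar_mono hfk1 hlek'
      have step2 : logStar (k':ℝ) ≤ logStar (Real.logb 2 x) := by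
        apply ih k' hk'lt hk'2
        rw [← hk'1R]; exact hlogb
      omega

lemma logStar_clog {m : ℕ} (hm : 3 ≤ m) :
    logStar ((Nat.clog 2 m : ℕ) : ℝ) + 1 ≤ logStar (m:ℝ) := by
  have hmR : (2:ℝ) < (m:ℝ) := by exact_mod_cast (by omega : 2 < m)
  rw [logStar_shift hmR]
  have hk2 : 2 ≤ Nat.clog 2 m := by
    have h1 : Nat.clog 2 3 ≤ Nat.clog 2 m := Nat.clog_mono_right 2 hm
    have h3' : Nat.clog 2 3 = 2 := by norm_num [Nat.clog]
    omega
  have hpow : 2 ^ (Nat.clog 2 m - 1) < m := by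
    have := Nat.pow_pred_clog_lt_self (by norm_num : (1:ℕ) < 2) (by omega : 1 < m)
    simpa [Nat.pred_eq_sub_one] using this
  have hlt : ((Nat.clog 2 m : ℕ):ℝ) - 1 < Real.logb 2 (m:ℝ) := by
    have hpowR : (((2:ℕ) ^ (Nat.clog 2 m - 1) : ℕ) : ℝ) < (m:ℝ) := by exact_mod_cast hpow
    have hpow2 : (((2:ℕ) ^ (Nat.clog 2 m - 1) : ℕ) : ℝ) = (2:ℝ) ^ (Nat.clog 2 m - 1) := by
      push_cast; ring
    rw [hpow2] at hpowR
    have hpos : (0:ℝ) < (2:ℝ) ^ (Nat.clog 2 m - 1) := by positivity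
    have hlt2 := Real.logb_lt_logb (by norm_num : (1:ℝ) < 2) hpos hpowR
    have heq : Real.logb 2 ((2:ℝ) ^ (Nat.clog 2 m - 1)) = ((Nat.clog 2 m - 1 : ℕ) : ℝ) := by
      rw [Real.logb_pow, Real.logb_self_eq_one (by norm_num)]; ring
    rw [heq] at hlt2
    have hc : ((Nat.clog 2 m - 1 : ℕ) : ℝ) = ((Nat.clog 2 m : ℕ):ℝ) - 1 := by
      push_cast [Nat.cast_sub (by omega : 1 ≤ Nat.clog 2 m)]; ring
    rw [hc] at hlt2; exact hlt2
  have := logStar_nat_le (Nat.clog 2 m) hk2 (Real.logb 2 (m:ℝ)) hlt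
  omega

/-- `Nat` version of the iterated ceiling log. -/
def G : ℕ → ℕ
  | m => if m ≤ 16 then 0 else G (Nat.clog 2 m) + 1
  termination_by m => m
  decreasing_by exact clog_lt_self (by omega)

lemma G_le16 {m : ℕ} (h : m ≤ 16) : G m = 0 := by rw [G]; simp [h]

lemma G_ge17 {m : ℕ} (h : 17 ≤ m) : G m = G (Nat.clog 2 m) + 1 := by
  rw [G]; simp [show ¬ m ≤ 16 by omega]

lemma G_mono : ∀ m' m : ℕ, m ≤ m' → G m ≤ G m' := by
  intro m'
  induction m' using Nat.strong_induction_on with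
  | _ m' ih =>
    intro m hm
    rcases le_or_gt m' 16 with h | h
    · rw [G_le16 h, G_le16 (by omega)]
    · rcases le_or_gt m 16 with h2 | h2
      · rw [G_le16 h2]; omega
      · rw [G_ge17 (m := m) (by omega), G_ge17 (m := m') (by omega)]
        have := ih (Nat.clog 2 m') (clog_lt_self (by omega)) (Nat.clog 2 m)
          (Nat.clog_mono_right 2 hm)
        omega

lemma G_le_logStar : ∀ m : ℕ, G m ≤ logStar (m:ℝ) := by
  intro m
  induction m using Nat.strong_induction_on with
  | _ m ih =>
    rcases le_or_gt m 16 with h | h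
    · rw [G_le16 h]; omega
    · rw [G_ge17 (by omega)]
      have h1 := ih (Nat.clog 2 m) (clog_lt_self (by omega))
      have h2 := logStar_clog (by omega : 3 ≤ m)
      omega

/-! ### The two-hop scheme -/

/-- Two multiples of `d` within distance `< d` of each other are equal. -/
lemma dvd_close_eq {d c c' : ℕ} (h1 : d ∣ c) (h2 : d ∣ c') (hle : c ≤ c')
    (hlt : c' - c < d) : c = c' := by
  have := Nat.eq_zero_of_dvd_of_lt (Nat.dvd_sub h2 h1) hlt
  omega

def S2A (m t : ℕ) : Finset (ℕ × ℕ) :=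
  ((Finset.range m) ×ˢ (Finset.range m)).filter fun p =>
    p.1 < p.2 ∧ 2^t ∣ p.2 ∧ p.2 - p.1 ≤ 2^t

def S2B (m t : ℕ) : Finset (ℕ × ℕ) :=
  ((Finset.range m) ×ˢ (Finset.range m)).filter fun p =>
    p.1 < p.2 ∧ 2^t ∣ p.1 ∧ p.2 - p.1 < 2^t

/-- Explicit two-hop shortcut scheme on `{0, ..., m-1}`. -/
def S2 (m : ℕ) : Finset (ℕ × ℕ) :=
  (Finset.range (Nat.clog 2 m + 1)).biUnion fun t => S2A m t ∪ S2B m t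

lemma S2_mem_bounds {m : ℕ} {p : ℕ × ℕ} (hp : p ∈ S2 m) : p.1 < p.2 ∧ p.2 < m := by
  simp only [S2, S2A, S2B, Finset.mem_biUnion, Finset.mem_union, Finset.mem_filter,
    Finset.mem_product, Finset.mem_range] at hp
  obtain ⟨t, _, h | h⟩ := hp
  · exact ⟨h.2.1, h.1.2⟩
  · exact ⟨h.2.1, h.1.2⟩

lemma S2A_card (m t : ℕ) : (S2A m t).card ≤ m := by
  have h : (S2A m t).card ≤ (Finset.range m).card := by
    apply Finset.card_le_card_of_injOn Prod.fst
    · intro p hp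
      simp only [S2A, Finset.mem_coe, Finset.mem_filter, Finset.mem_product, Finset.mem_range] at hp
      simp [hp.1.1]
    · intro p hp q hq hfst
      simp only [S2A, Finset.coe_filter, Set.mem_setOf_eq, Finset.mem_product,
        Finset.mem_range] at hp hq
      obtain ⟨⟨_, _⟩, hp1, hp2, hp3⟩ := hp
      obtain ⟨⟨_, _⟩, hq1, hq2, hq3⟩ := hq
      have hq1' : p.1 < q.2 := by omega
      have heq : p.2 = q.2 := by
        rcases Nat.le_total p.2 q.2 with h | h
        · exact dvd_close_eq hp2 hq2 h (by omega)
        · exact (dvd_close_eq hq2 hp2 h (by omega)).symm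
      exact Prod.ext hfst heq
  simpa using h

lemma S2B_card (m t : ℕ) : (S2B m t).card ≤ m := by
  have h : (S2B m t).card ≤ (Finset.range m).card := by
    apply Finset.card_le_card_of_injOn Prod.snd
    · intro p hp
      simp only [S2B, Finset.mem_coe, Finset.mem_filter, Finset.mem_product, Finset.mem_range] at hp
      simp [hp.1.2]
    · intro p hp q hq hsnd
      simp only [S2B, Finset.coe_filter, Set.mem_setOf_eq, Finset.mem_product,
        Finset.mem_range] at hp hq
      obtain ⟨⟨_, _⟩, hp1, hp2, hp3⟩ := hp
      obtain ⟨⟨_, _⟩, hq1, hq2, hq3⟩ := hq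
      have heq : p.1 = q.1 := by
        rcases Nat.le_total p.1 q.1 with h | h
        · exact dvd_close_eq hp2 hq2 h (by omega)
        · exact (dvd_close_eq hq2 hp2 h (by omega)).symm
      exact Prod.ext heq hsnd
  simpa using h

lemma S2_card (m : ℕ) : (S2 m).card ≤ (Nat.clog 2 m + 1) * (2 * m) := by
  refine le_trans Finset.card_biUnion_le ?_
  calc ∑ t ∈ Finset.range (Nat.clog 2 m + 1), (S2A m t ∪ S2B m t).card
      ≤ ∑ t ∈ Finset.range (Nat.clog 2 m + 1), (2 * m) := by
        apply Finset.sum_le_sum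
        intro t _
        refine le_trans (Finset.card_union_le _ _) ?_
        have := S2A_card m t
        have := S2B_card m t
        omega
    _ = (Nat.clog 2 m + 1) * (2 * m) := by
        rw [Finset.sum_const, Finset.card_range]; ring

/-- An adjacent multiple of `2^(t+1)`. -/
lemma next_dvd_up {t c : ℕ} (h : 2^t ∣ c) : 2^(t+1) ∣ c ∨ 2^(t+1) ∣ (c + 2^t) := by
  obtain ⟨a, rfl⟩ := h
  rcases Nat.even_or_odd a with he | ho
  · left
    obtain ⟨a', rfl⟩ := he
    exact ⟨a', by ring⟩
  · right
    obtain ⟨a', rfl⟩ := ho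
    exact ⟨a' + 1, by ring⟩

lemma next_dvd_down {t c : ℕ} (h : 2^t ∣ c) (hc : 2^t ≤ c) :
    2^(t+1) ∣ c ∨ 2^(t+1) ∣ (c - 2^t) := by
  obtain ⟨a, rfl⟩ := h
  rcases Nat.even_or_odd a with he | ho
  · left
    obtain ⟨a', rfl⟩ := he
    exact ⟨a', by ring⟩
  · right
    obtain ⟨a', rfl⟩ := ho
    refine ⟨a', ?_⟩
    have : 2 ^ t * (2 * a' + 1) - 2^t = 2^t * (2 * a') := by
      have : 2 ^ t * (2 * a' + 1) = 2^t * (2 * a') + 2^t := by ring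
      omega
    rw [this]; ring

/-- The two-hop property of `S2`. -/
lemma S2_hop {m i j : ℕ} (hij : i < j) (hjm : j < m) :
    (i, j) ∈ S2 m ∨ ∃ c, i < c ∧ c < j ∧ (i, c) ∈ S2 m ∧ (c, j) ∈ S2 m := by
  classical
  set P : ℕ → Prop := fun t => ∃ c, i < c ∧ c ≤ j ∧ 2^t ∣ c with hP
  have hP0 : P 0 := ⟨j, hij, le_rfl, one_dvd j⟩
  set t0 := Nat.findGreatest P (Nat.clog 2 m) with ht0
  have hPt0 : P t0 := Nat.findGreatest_spec (Nat.zero_le _) hP0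
  obtain ⟨c, hic, hcj, hdvd⟩ := hPt0
  have hm2 : m ≤ 2 ^ (Nat.clog 2 m) := Nat.le_pow_clog (by norm_num) m
  -- any witness for P (t0+1) contradicts maximality
  have hmax : ¬ P (t0 + 1) := by
    intro hp
    obtain ⟨c', hic', hc'j, hdvd'⟩ := hp
    have hc'pos : 0 < c' := by omega
    have hc'ge : 2^(t0+1) ≤ c' := Nat.le_of_dvd hc'pos hdvd'
    have ht1 : t0 + 1 ≤ Nat.clog 2 m := by
      by_contra hcon
      push_neg at hcon
      have : 2 ^ (Nat.clog 2 m) ≤ 2 ^ (t0 + 1) := Nat.pow_le_pow_right (by norm_num) (by omega)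
      omega
    have hng := Nat.findGreatest_is_greatest (P := P) (n := Nat.clog 2 m) (k := t0 + 1)
      (by rw [← ht0]; omega) ht1
    exact hng ⟨c', hic', hc'j, hdvd'⟩
  have hct0 : 2^t0 ≤ c := Nat.le_of_dvd (by omega) hdvd
  -- c - i ≤ 2^t0
  have hci : c - i ≤ 2^t0 := by
    by_contra hcon
    push_neg at hcon
    -- c - 2^t0 > i, also a multiple of 2^t0 in (i, j]
    rcases next_dvd_up hdvd with h | h
    · exact hmax ⟨c, hic, hcj, h⟩
    · rcases next_dvd_down hdvd hct0 with h2 | h2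
      · exact hmax ⟨c, hic, hcj, h2⟩
      · exact hmax ⟨c - 2^t0, by omega, by omega, h2⟩
  have ht0clog : t0 ≤ Nat.clog 2 m := Nat.findGreatest_le _
  rcases eq_or_lt_of_le hcj with hceq | hclt
  · -- c = j : single edge in S2A
    left
    subst hceq
    simp only [S2, Finset.mem_biUnion]
    refine ⟨t0, Finset.mem_range.mpr (by omega), ?_⟩
    apply Finset.mem_union_left
    simp only [S2A, Finset.mem_filter, Finset.mem_product, Finset.mem_range]
    exact ⟨⟨by omega, hjm⟩, hij, hdvd, hci⟩
  · -- c < j : two edges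
    right
    have hjc : j - c < 2^t0 := by
      by_contra hcon
      push_neg at hcon
      rcases next_dvd_up hdvd with h | h
      · exact hmax ⟨c, hic, by omega, h⟩
      · exact hmax ⟨c + 2^t0, by omega, by omega, h⟩
    refine ⟨c, hic, hclt, ?_, ?_⟩
    · simp only [S2, Finset.mem_biUnion]
      refine ⟨t0, Finset.mem_range.mpr (by omega), ?_⟩
      apply Finset.mem_union_left
      simp only [S2A, Finset.mem_filter, Finset.mem_product, Finset.mem_range]
      exact ⟨⟨by omega, by omega⟩, hic, hdvd, hci⟩
    · simp only [S2, Finset.mem_biUnion]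
      refine ⟨t0, Finset.mem_range.mpr (by omega), ?_⟩
      apply Finset.mem_union_right
      simp only [S2B, Finset.mem_filter, Finset.mem_product, Finset.mem_range]
      exact ⟨⟨by omega, hjm⟩, hclt, hdvd, hjc⟩


/-! ### The four-hop scheme -/

def AP (m : ℕ) : Finset (ℕ × ℕ) :=
  ((Finset.range m) ×ˢ (Finset.range m)).filter fun p => p.1 < p.2

noncomputable def S4 : ℕ → Finset (ℕ × ℕ)
  | m =>
    if h : m ≤ 16 then AP m
    else
      (((Finset.range m).filter fun i => (i / Nat.clog 2 m + 1) * Nat.clog 2 m < m).image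
        fun i => (i, (i / Nat.clog 2 m + 1) * Nat.clog 2 m)) ∪
      (((Finset.range m).filter fun j => ¬ Nat.clog 2 m ∣ j).image
        fun j => ((j / Nat.clog 2 m) * Nat.clog 2 m, j)) ∪
      ((S2 ((m + Nat.clog 2 m - 1) / Nat.clog 2 m)).image
        fun p => (p.1 * Nat.clog 2 m, p.2 * Nat.clog 2 m)) ∪
      ((Finset.range ((m + Nat.clog 2 m - 1) / Nat.clog 2 m)).biUnion
        fun k => (S4 (min (Nat.clog 2 m) (m - k * Nat.clog 2 m))).image
          fun p => (p.1 + k * Nat.clog 2 m, p.2 + k * Nat.clog 2 m))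
  termination_by m => m
  decreasing_by
    exact lt_of_le_of_lt (min_le_left _ _) (clog_lt_self (by omega))

lemma S4_le16 {m : ℕ} (h : m ≤ 16) : S4 m = AP m := by rw [S4.eq_def]; simp [h]

lemma S4_ge17 {m : ℕ} (h : 17 ≤ m) : S4 m =
      (((Finset.range m).filter fun i => (i / Nat.clog 2 m + 1) * Nat.clog 2 m < m).image
        fun i => (i, (i / Nat.clog 2 m + 1) * Nat.clog 2 m)) ∪
      (((Finset.range m).filter fun j => ¬ Nat.clog 2 m ∣ j).image
        fun j => ((j / Nat.clog 2 m) * Nat.clog 2 m, j)) ∪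
      ((S2 ((m + Nat.clog 2 m - 1) / Nat.clog 2 m)).image
        fun p => (p.1 * Nat.clog 2 m, p.2 * Nat.clog 2 m)) ∪
      ((Finset.range ((m + Nat.clog 2 m - 1) / Nat.clog 2 m)).biUnion
        fun k => (S4 (min (Nat.clog 2 m) (m - k * Nat.clog 2 m))).image
          fun p => (p.1 + k * Nat.clog 2 m, p.2 + k * Nat.clog 2 m)) := by
  rw [S4.eq_def]; simp [show ¬ m ≤ 16 by omega]

section S4facts

variable {m : ℕ}

lemma numB_eq (hm : 17 ≤ m) :
    (m + Nat.clog 2 m - 1) / Nat.clog 2 m = (m - 1) / Nat.clog 2 m + 1 := by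
  have hb : 0 < Nat.clog 2 m := Nat.clog_pos (by norm_num) (by omega)
  have h1 : m + Nat.clog 2 m - 1 = (m - 1) + Nat.clog 2 m := by omega
  rw [h1, Nat.add_div_right _ hb]

lemma block_le (hm : 17 ≤ m) {q : ℕ} (hq : q < (m + Nat.clog 2 m - 1) / Nat.clog 2 m) :
    q * Nat.clog 2 m ≤ m - 1 := by
  have hb : 0 < Nat.clog 2 m := Nat.clog_pos (by norm_num) (by omega)
  rw [numB_eq hm] at hq
  have hq' : q ≤ (m - 1) / Nat.clog 2 m := by omega
  calc q * Nat.clog 2 m ≤ ((m - 1) / Nat.clog 2 m) * Nat.clog 2 m :=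
        Nat.mul_le_mul_right _ hq'
    _ ≤ m - 1 := Nat.div_mul_le_self _ _

lemma div_lt_numB (hm : 17 ≤ m) {i : ℕ} (hi : i < m) :
    i / Nat.clog 2 m < (m + Nat.clog 2 m - 1) / Nat.clog 2 m := by
  rw [numB_eq hm]
  have : i / Nat.clog 2 m ≤ (m - 1) / Nat.clog 2 m := Nat.div_le_div_right (by omega)
  omega

lemma S4_mem_bounds : ∀ m : ℕ, ∀ p ∈ S4 m, p.1 < p.2 ∧ p.2 < m := by
  intro m
  induction m using Nat.strong_induction_on with
  | _ m ih =>
    intro p hp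
    rcases le_or_gt m 16 with hm | hm
    · rw [S4_le16 hm] at hp
      simp only [AP, Finset.mem_filter, Finset.mem_product, Finset.mem_range] at hp
      exact ⟨hp.2, hp.1.2⟩
    · rw [S4_ge17 (by omega)] at hp
      set b := Nat.clog 2 m with hbdef
      have hb : 0 < b := Nat.clog_pos (by norm_num) (by omega)
      simp only [Finset.mem_union] at hp
      rcases hp with ((h | h) | h) | h
      · simp only [Finset.mem_image, Finset.mem_filter, Finset.mem_range] at h
        obtain ⟨i, ⟨him, hLm⟩, rfl⟩ := h
        refine ⟨?_, hLm⟩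
        have : i / b < i / b + 1 := by omega
        exact (Nat.div_lt_iff_lt_mul hb).mp this
      · simp only [Finset.mem_image, Finset.mem_filter, Finset.mem_range] at h
        obtain ⟨j, ⟨hjm, hnd⟩, rfl⟩ := h
        refine ⟨?_, hjm⟩
        have h1 : (j / b) * b ≤ j := Nat.div_mul_le_self _ _
        rcases eq_or_lt_of_le h1 with he | hl
        · exact absurd ⟨j / b, by rw [Nat.mul_comm]; exact he.symm⟩ hnd
        · exact hl
      · simp only [Finset.mem_image] at h
        obtain ⟨q, hq, rfl⟩ := h
        obtain ⟨h1, h2⟩ := S2_mem_bounds hq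
        constructor
        · exact (Nat.mul_lt_mul_right hb).mpr h1
        · have hble := block_le (by omega : 17 ≤ m) (q := q.2) h2
          rw [← hbdef] at hble
          omega
      · simp only [Finset.mem_biUnion, Finset.mem_image, Finset.mem_range] at h
        obtain ⟨k, hk, q, hq, rfl⟩ := h
        have hs : min b (m - k * b) < m := by
          have := clog_lt_self (show 2 ≤ m by omega)
          omega
        obtain ⟨h1, h2⟩ := ih _ hs q hq
        have h3 : q.2 < m - k * b := lt_of_lt_of_le h2 (min_le_right _ _)
        exact ⟨by omega, by omega⟩

lemma sum_min_le : ∀ M m b : ℕ, (∑ k ∈ Finset.range M, min b (m - k * b)) ≤ min (M * b) m := by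
  intro M
  induction M with
  | zero => simp
  | succ M ih =>
    intro m b
    rw [Finset.sum_range_succ]
    have h1 := ih m b
    have h2 : (M + 1) * b = M * b + b := by ring
    omega

lemma S4_card : ∀ m : ℕ, (S4 m).card ≤ 160 * m * (1 + G m) := by
  intro m
  induction m using Nat.strong_induction_on with
  | _ m ih =>
    rcases le_or_gt m 16 with hm | hm
    · rw [S4_le16 hm]
      calc (AP m).card ≤ ((Finset.range m) ×ˢ (Finset.range m)).card :=
            Finset.card_filter_le _ _
        _ = m * m := by simp [Finset.card_product]
        _ ≤ 160 * m * (1 + G m) := by nlinarith [Nat.zero_le (G m)]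
    · rw [S4_ge17 (by omega)]
      set b := Nat.clog 2 m with hbdef
      have hb : 0 < b := Nat.clog_pos (by norm_num) (by omega)
      have hbm : b < m := clog_lt_self (by omega)
      set M := (m + b - 1) / b with hMdef
      have hMb : M * b ≤ m + b - 1 := by
        rw [hMdef]; exact Nat.div_mul_le_self _ _
      have hMm : M ≤ m := by
        rw [hMdef, numB_eq (by omega), ← hbdef]
        have h1 : (m - 1) / b ≤ m - 1 := Nat.div_le_self _ _
        omega
      -- card of the four pieces
      have hc1 : (((Finset.range m).filter fun i => (i / b + 1) * b < m).image
          fun i => (i, (i / b + 1) * b)).card ≤ m := by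
        refine le_trans Finset.card_image_le (le_trans (Finset.card_filter_le _ _) ?_)
        simp
      have hc2 : (((Finset.range m).filter fun j => ¬ b ∣ j).image
          fun j => ((j / b) * b, j)).card ≤ m := by
        refine le_trans Finset.card_image_le (le_trans (Finset.card_filter_le _ _) ?_)
        simp
      have hc3 : ((S2 M).image fun p => (p.1 * b, p.2 * b)).card ≤ 6 * m := by
        refine le_trans Finset.card_image_le (le_trans (S2_card M) ?_)
        have hclog : Nat.clog 2 M ≤ b := by
          rw [hbdef]; exact Nat.clog_mono_right 2 hMm
        have hbm' : b ≤ m := le_of_lt hbm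
        calc (Nat.clog 2 M + 1) * (2 * M) ≤ (b + 1) * (2 * M) := by
              apply Nat.mul_le_mul_right; omega
          _ = 2 * (M * b) + 2 * M := by ring
          _ ≤ 6 * m := by omega
      have hc4 : ((Finset.range M).biUnion
          fun k => (S4 (min b (m - k * b))).image
            fun p => (p.1 + k * b, p.2 + k * b)).card ≤ 160 * m * (1 + G b) := by
        refine le_trans Finset.card_biUnion_le ?_
        have hterm : ∀ k ∈ Finset.range M,
            ((S4 (min b (m - k * b))).image
              fun p => (p.1 + k * b, p.2 + k * b)).card
              ≤ 160 * (1 + G b) * min b (m - k * b) := by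
          intro k _
          refine le_trans Finset.card_image_le ?_
          have hs : min b (m - k * b) < m := by omega
          have h1 := ih _ hs
          have h2 : G (min b (m - k * b)) ≤ G b := G_mono b _ (min_le_left _ _)
          calc (S4 (min b (m - k * b))).card
              ≤ 160 * min b (m - k * b) * (1 + G (min b (m - k * b))) := h1
            _ ≤ 160 * min b (m - k * b) * (1 + G b) := by
                apply Nat.mul_le_mul_left; omega
            _ = 160 * (1 + G b) * min b (m - k * b) := by ring
        refine le_trans (Finset.sum_le_sum hterm) ?_
        rw [← Finset.mul_sum]
        have := sum_min_le M m b
        calc 160 * (1 + G b) * (∑ k ∈ Finset.range M, min b (m - k * b))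
            ≤ 160 * (1 + G b) * m := by
              apply Nat.mul_le_mul_left; omega
          _ = 160 * m * (1 + G b) := by ring
      have hG : G m = G b + 1 := G_ge17 (by omega)
      calc (_ ∪ _ ∪ _ ∪ _ : Finset (ℕ × ℕ)).card
          ≤ (_ ∪ _ ∪ _ : Finset (ℕ × ℕ)).card + _ := Finset.card_union_le _ _
        _ ≤ ((_ ∪ _ : Finset (ℕ × ℕ)).card + _) + _ := by
            gcongr
            exact Finset.card_union_le _ _
        _ ≤ ((_ + _) + _) + _ := by
            gcongr
            exact Finset.card_union_le _ _
        _ ≤ ((m + m) + 6 * m) + 160 * m * (1 + G b) := by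
            gcongr
        _ ≤ 160 * m * (1 + G m) := by
            rw [hG]
            have h8 : 160 * m * (1 + (G b + 1)) = 160 * m * (1 + G b) + 160 * m := by ring
            omega

end S4facts
section S4hop

lemma S4_hop : ∀ m i j : ℕ, i < j → j < m → ∃ l : List ℕ,
    l.Chain' (fun a c => (a, c) ∈ S4 m) ∧ l.Pairwise (· < ·) ∧
    l.head? = some i ∧ l.getLast? = some j ∧ l.length ≤ 5 := by
  intro m
  induction m using Nat.strong_induction_on with
  | _ m ih =>
    intro i j hij hjm
    rcases le_or_gt m 16 with hm | hm
    · refine ⟨[i, j], ?_, ?_, rfl, by simp, by simp⟩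
      · rw [S4_le16 hm]
        simp only [List.Chain', List.isChain_cons_cons, List.isChain_singleton, and_true]
        simp only [AP, Finset.mem_filter, Finset.mem_product, Finset.mem_range]
        exact ⟨⟨by omega, hjm⟩, hij⟩
      · simp [List.pairwise_cons, hij]
    · have hm17 : 17 ≤ m := by omega
      have hb : 0 < Nat.clog 2 m := Nat.clog_pos (by norm_num) (by omega)
      have hbm : Nat.clog 2 m < m := clog_lt_self (by omega)
      set b := Nat.clog 2 m with hbdef
      set M := (m + b - 1) / b with hMdef
      have hmemE1 : ∀ x : ℕ, x < m → (x / b + 1) * b < m →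
          (x, (x / b + 1) * b) ∈ S4 m := by
        intro x h1 h2
        rw [S4_ge17 hm17, ← hbdef]
        apply Finset.mem_union_left
        apply Finset.mem_union_left
        apply Finset.mem_union_left
        simp only [Finset.mem_image, Finset.mem_filter, Finset.mem_range]
        exact ⟨x, ⟨h1, h2⟩, rfl⟩
      have hmemE2 : ∀ x : ℕ, x < m → ¬ b ∣ x → ((x / b) * b, x) ∈ S4 m := by
        intro x h1 h2
        rw [S4_ge17 hm17, ← hbdef]
        apply Finset.mem_union_left
        apply Finset.mem_union_left
        apply Finset.mem_union_right
        simp only [Finset.mem_image, Finset.mem_filter, Finset.mem_range]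
        exact ⟨x, ⟨h1, h2⟩, rfl⟩
      have hmemLead : ∀ p : ℕ × ℕ, p ∈ S2 M → (p.1 * b, p.2 * b) ∈ S4 m := by
        intro p hp
        rw [S4_ge17 hm17, ← hbdef, ← hMdef]
        apply Finset.mem_union_left
        apply Finset.mem_union_right
        simp only [Finset.mem_image]
        exact ⟨p, hp, rfl⟩
      have hmemBlock : ∀ k : ℕ, k < M → ∀ p : ℕ × ℕ, p ∈ S4 (min b (m - k * b)) →
          (p.1 + k * b, p.2 + k * b) ∈ S4 m := by
        intro k hk p hp
        rw [S4_ge17 hm17, ← hbdef, ← hMdef]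
        apply Finset.mem_union_right
        simp only [Finset.mem_biUnion, Finset.mem_image, Finset.mem_range]
        exact ⟨k, hk, p, hp, rfl⟩
      have him : i < m := by omega
      have hiM : i / b < M := by
        have := div_lt_numB hm17 him
        rw [← hbdef] at this
        rw [hMdef]; exact this
      have hjM : j / b < M := by
        have := div_lt_numB hm17 hjm
        rw [← hbdef] at this
        rw [hMdef]; exact this
      have hib : (i / b) * b ≤ i := Nat.div_mul_le_self i b
      have hjb : (j / b) * b ≤ j := Nat.div_mul_le_self j b
      have hiup : i < (i / b + 1) * b := by
        have h' : i / b < i / b + 1 := by omega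
        exact (Nat.div_lt_iff_lt_mul hb).mp h'
      have hjup : j < (j / b + 1) * b := by
        have h' : j / b < j / b + 1 := by omega
        exact (Nat.div_lt_iff_lt_mul hb).mp h'
      rcases eq_or_ne (i / b) (j / b) with hkk | hkk
      · -- same block: recurse
        have hs : min b (m - (i / b) * b) < m := by omega
        have hexp : (i / b + 1) * b = (i / b) * b + b := by ring
        have hj' : j - (i / b) * b < min b (m - (i / b) * b) := by
          rw [hkk] at hexp ⊢
          omega
        obtain ⟨l', hc', hs', hh', hl', hlen'⟩ :=
          ih _ hs (i - (i / b) * b) (j - (i / b) * b) (by omega) hj'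
        have hkM : i / b < M := hiM
        refine ⟨l'.map (· + (i / b) * b), ?_, ?_, ?_, ?_, ?_⟩
        · change List.IsChain _ _; rw [List.isChain_map]
          refine List.IsChain.imp ?_ hc'
          intro a c hac
          exact hmemBlock (i / b) hkM (a, c) hac
        · rw [List.pairwise_map]
          exact hs'.imp (fun h => by omega)
        · rw [List.head?_map, hh']
          simp only [Option.map_some]
          exact congrArg some (by omega)
        · rw [List.getLast?_map, hl']
          simp only [Option.map_some]
          exact congrArg some (by rw [hkk]; omega)
        · rw [List.length_map]; exact hlen'
      · -- different blocks
        have hdivle : i / b ≤ j / b := Nat.div_le_div_right (le_of_lt hij)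
        have hdiv : i / b < j / b := by omega
        have hpq : i / b + 1 ≤ j / b := hdiv
        have hLR : (i / b + 1) * b ≤ (j / b) * b := Nat.mul_le_mul_right _ hpq
        have hLm : (i / b + 1) * b < m := by omega
        have hE1 : (i, (i / b + 1) * b) ∈ S4 m := hmemE1 i him hLm
        have hndvd_of_lt : (j / b) * b < j → ¬ b ∣ j := by
          intro hlt hdvd
          have := Nat.div_mul_cancel hdvd
          omega
        rcases eq_or_lt_of_le hpq with hpqe | hpql
        · -- adjacent blocks: L = R
          have hLReq : (i / b + 1) * b = (j / b) * b := by rw [hpqe]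
          rcases eq_or_lt_of_le hjb with hRj | hRj
          · -- R = j, single edge i → L = j
            have hLj : (i / b + 1) * b = j := by omega
            refine ⟨[i, j], ?_, ?_, rfl, by simp, by simp⟩
            · simp only [List.Chain', List.isChain_cons_cons, List.isChain_singleton, and_true]
              rw [← hLj]; exact hE1
            · simp [List.pairwise_cons, hij]
          · -- R < j
            have hnd : ¬ b ∣ j := hndvd_of_lt hRj
            have hE2 : ((j / b) * b, j) ∈ S4 m := hmemE2 j hjm hnd
            refine ⟨[i, (i / b + 1) * b, j], ?_, ?_, rfl, by simp, by simp⟩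
            · simp only [List.Chain', List.isChain_cons_cons, List.isChain_singleton, and_true]
              refine ⟨hE1, ?_⟩
              rw [hLReq]; exact hE2
            · simp [List.pairwise_cons]
              omega
        · -- non-adjacent leader blocks
          have hLRlt : (i / b + 1) * b < (j / b) * b := (Nat.mul_lt_mul_right hb).mpr hpql
          rcases S2_hop hpql hjM with hdir | ⟨c, hpc, hcq, hS2a, hS2b⟩
          · have hLead : ((i / b + 1) * b, (j / b) * b) ∈ S4 m := hmemLead _ hdir
            rcases eq_or_lt_of_le hjb with hRj | hRj
            · refine ⟨[i, (i / b + 1) * b, (j / b) * b], ?_, ?_, rfl, by simpa using hRj, by simp⟩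
              · simp only [List.Chain', List.isChain_cons_cons, List.isChain_singleton, and_true]
                exact ⟨hE1, hLead⟩
              · simp [List.pairwise_cons]
                omega
            · have hnd : ¬ b ∣ j := hndvd_of_lt hRj
              have hE2 : ((j / b) * b, j) ∈ S4 m := hmemE2 j hjm hnd
              refine ⟨[i, (i / b + 1) * b, (j / b) * b, j], ?_, ?_, rfl, by simp, by simp⟩
              · simp only [List.Chain', List.isChain_cons_cons, List.isChain_singleton, and_true]
                exact ⟨hE1, hLead, hE2⟩
              · simp [List.pairwise_cons]
                omega
          · have hLc : ((i / b + 1) * b, c * b) ∈ S4 m := hmemLead ((i / b + 1), c) hS2a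
            have hcR : (c * b, (j / b) * b) ∈ S4 m := hmemLead (c, (j / b)) hS2b
            have h1 : (i / b + 1) * b < c * b := (Nat.mul_lt_mul_right hb).mpr hpc
            have h2 : c * b < (j / b) * b := (Nat.mul_lt_mul_right hb).mpr hcq
            rcases eq_or_lt_of_le hjb with hRj | hRj
            · refine ⟨[i, (i / b + 1) * b, c * b, (j / b) * b], ?_, ?_, rfl,
                by simpa using hRj, by simp⟩
              · simp only [List.Chain', List.isChain_cons_cons, List.isChain_singleton, and_true]
                exact ⟨hE1, hLc, hcR⟩
              · simp [List.pairwise_cons]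
                omega
            · have hnd : ¬ b ∣ j := hndvd_of_lt hRj
              have hE2 : ((j / b) * b, j) ∈ S4 m := hmemE2 j hjm hnd
              refine ⟨[i, (i / b + 1) * b, c * b, (j / b) * b, j], ?_, ?_, rfl, by simp, by simp⟩
              · simp only [List.Chain', List.isChain_cons_cons, List.isChain_singleton, and_true]
                exact ⟨hE1, hLc, hcR, hE2⟩
              · simp [List.pairwise_cons]
                omega

end S4hop

/-! ### Path lemmas for directed graphs -/

lemma chain'_reaches {α : Type*} {R : α → α → Prop} :
    ∀ l : List α, l.Chain' R → ∀ x ∈ l, ∀ v, l.getLast? = some v →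
      Relation.ReflTransGen R x v := by
  intro l
  induction l with
  | nil => intro _ x hx; simp at hx
  | cons a t iht =>
    intro hc x hx v hv
    rcases List.mem_cons.mp hx with rfl | hxt
    · cases t with
      | nil =>
        simp at hv
        subst hv
        exact Relation.ReflTransGen.refl
      | cons bb tt =>
        have hstep : R x bb := (List.isChain_cons_cons.mp hc).1
        have htail : Relation.ReflTransGen R bb v := by
          apply iht (List.isChain_cons_cons.mp hc).2 bb (by simp) v
          simpa using hv
        exact Relation.ReflTransGen.head hstep htail
    · cases t with
      | nil => simp at hxt
      | cons bb tt =>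
        apply iht (List.isChain_cons_cons.mp hc).2 x hxt v
        simpa using hv

lemma head_reaches {α : Type*} {R : α → α → Prop} :
    ∀ l : List α, l.Chain' R → ∀ u, l.head? = some u → ∀ x ∈ l,
      Relation.ReflTransGen R u x := by
  intro l
  induction l with
  | nil => simp
  | cons a t iht =>
    intro hc u hu x hx
    simp only [List.head?_cons, Option.some.injEq] at hu
    subst hu
    rcases List.mem_cons.mp hx with rfl | hxt
    · exact Relation.ReflTransGen.refl
    · cases t with
      | nil => simp at hxt
      | cons bb tt =>
        have hstep : R a bb := (List.isChain_cons_cons.mp hc).1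
        exact Relation.ReflTransGen.head hstep
          (iht (List.isChain_cons_cons.mp hc).2 bb rfl x hxt)

lemma TCrel_trans {n : ℕ} {E : Set (Edge n)} (hD : IsDAG E) {a b c : Fin n}
    (h1 : TCrel E a b) (h2 : TCrel E b c) : TCrel E a c := by
  obtain ⟨hab, P, ⟨hPnd, hPch⟩, hPh, hPl⟩ := h1
  obtain ⟨hbc, Q, ⟨hQnd, hQch⟩, hQh, hQl⟩ := h2
  cases Q with
  | nil => simp at hQh
  | cons b' Qt =>
    simp only [List.head?_cons, Option.some.injEq] at hQh
    have hQh' := hQh.symm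
    subst hQh'
    cases Qt with
    | nil =>
      simp only [List.getLast?_singleton, Option.some.injEq] at hQl
      exact absurd hQl hbc
    | cons q Qt' =>
      have hQl' : (q :: Qt').getLast? = some c := by simpa using hQl
      have hstep : (b, q) ∈ E := (List.isChain_cons_cons.mp hQch).1
      have hQch' : (q :: Qt').Chain' (fun a b => (a, b) ∈ E) := (List.isChain_cons_cons.mp hQch).2
      have hQtnd : (q :: Qt').Nodup := (List.nodup_cons.mp hQnd).2
      have hbQt : b ∉ (q :: Qt') := (List.nodup_cons.mp hQnd).1
      have hdisj : ∀ x, x ∈ P → x ∈ (q :: Qt') → False := by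
        intro x hx1 hx2
        have hr1 : Reaches E x b := chain'_reaches P hPch x hx1 b hPl
        have hr2 : Reaches E q x := head_reaches _ hQch' q rfl x hx2
        exact hD b q hstep (hr2.trans hr1)
      have hac : a ≠ c := by
        intro h
        have hra : Reaches E a b :=
          chain'_reaches P hPch a (List.mem_of_mem_head? (by rw [hPh]; simp)) b hPl
        have hrb : Reaches E b c :=
          chain'_reaches _ hQch b (by simp) c hQl
        rw [← h] at hrb
        rcases Relation.ReflTransGen.cases_head hra with h2 | ⟨y, hay, hyb⟩
        · exact hab h2
        · exact hD a y hay (hyb.trans hrb)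
      refine ⟨hac, P ++ (q :: Qt'), ⟨?_, ?_⟩, ?_, ?_⟩
      · exact hPnd.append hQtnd (fun x hx1 hx2 => hdisj x hx1 hx2)
      · refine List.IsChain.append hPch hQch' ?_
        intro x hx y hy
        rw [hPl] at hx
        simp only [Option.mem_def, Option.some.injEq, List.head?_cons] at hx hy
        subst hx; subst hy
        exact hstep
      · have hPne : P ≠ [] := by
          intro h; rw [h] at hPh; simp at hPh
        rw [List.head?_append, hPh]
        rfl
      · rw [List.getLast?_append, hQl']
        rfl

lemma chain_TCrel_aux {n : ℕ} {E : Set (Edge n)} (hD : IsDAG E) {Ch : List (Fin n)}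
    (hCh : IsChainIn E Ch) :
    ∀ d a : ℕ, ∀ h : a + d + 1 < Ch.length,
      TCrel E (Ch.get ⟨a, by omega⟩) (Ch.get ⟨a + d + 1, h⟩) := by
  intro d
  induction d with
  | zero =>
    intro a h
    exact (List.isChain_iff_getElem.mp hCh.2) a (by omega)
  | succ d ihd =>
    intro a h
    have h1 := ihd a (by omega)
    have h2 := (List.isChain_iff_getElem.mp hCh.2) (a + d + 1) (by omega)
    exact TCrel_trans hD h1 h2

lemma chain_TCrel {n : ℕ} {E : Set (Edge n)} (hD : IsDAG E) {Ch : List (Fin n)}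
    (hCh : IsChainIn E Ch) {a c : ℕ} (hac : a < c) (hc : c < Ch.length) :
    TCrel E (Ch.get ⟨a, by omega⟩) (Ch.get ⟨c, hc⟩) := by
  obtain ⟨d, rfl⟩ : ∃ d, c = a + d + 1 := ⟨c - a - 1, by omega⟩
  exact chain_TCrel_aux hD hCh d a hc

lemma hdist_le_of_path {n : ℕ} {E : Set (Edge n)} {u v : Fin n} {l : List (Fin n)}
    (h : IsPathFromTo E u v l) (k : ℕ) (hk : l.length = k + 1) :
    hdist E u v ≤ (k : ℕ∞) := by
  apply sInf_le
  refine ⟨l, h, ?_⟩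
  rw [hk]; push_cast; ring

lemma sorted_le_getLast : ∀ l : List ℕ, l.Pairwise (· < ·) → ∀ j, l.getLast? = some j →
    ∀ x ∈ l, x ≤ j := by
  intro l
  induction l with
  | nil => simp
  | cons a t iht =>
    intro hsort j hj x hx
    cases t with
    | nil =>
      simp only [List.getLast?_singleton, Option.some.injEq] at hj
      simp only [List.mem_singleton] at hx
      omega
    | cons bb tt =>
      have hj' : (bb :: tt).getLast? = some j := by simpa using hj
      have hjmem : j ∈ bb :: tt := by
        have : j ∈ (bb :: tt).getLast? := by rw [hj']; rfl
        exact List.mem_of_mem_getLast? this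
      rcases List.mem_cons.mp hx with rfl | hxt
      · have := (List.pairwise_cons.mp hsort).1 j hjmem
        omega
      · exact iht (List.pairwise_cons.mp hsort).2 j hj' x hxt

end LS

/-- **super-shortcutting.** There is an absolute constant `C > 0` such that
for every DAG `G` on `n ≥ 2` vertices and every set `𝒞` of pairwise vertex-disjoint chains
of `G`, there is a set `H ⊆ TC(G)` with `|H| ≤ C·n·(1 + log* n)` such that for every chain
`C ∈ 𝒞` and all `u, v ∈ C` with `u` occurring before `v` on `C`, `dist_{G∪H}(u,v) ≤ 4`. -/
theorem supershortcut_chains :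
    ∃ C : ℝ, 0 < C ∧
      ∀ n : ℕ, 2 ≤ n → ∀ E : Set (Edge n), IsDAG E →
        ∀ 𝒞 : Set (List (Fin n)), (∀ Ch ∈ 𝒞, IsChainIn E Ch) →
          (∀ C₁ ∈ 𝒞, ∀ C₂ ∈ 𝒞, C₁ ≠ C₂ → ∀ x : Fin n, x ∈ C₁ → x ∉ C₂) →
          ∃ H : Set (Edge n), H ⊆ TCset E ∧
            (H.ncard : ℝ) ≤ C * n * (1 + logStar n) ∧
            ∀ Ch ∈ 𝒞, ∀ i j : ℕ, i < j → ∀ u v : Fin n,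
              Ch[i]? = some u → Ch[j]? = some v →
              hdist (E ∪ H) u v ≤ (4 : ℕ∞) := by
  refine ⟨160, by norm_num, ?_⟩
  intro n hn E hDAG 𝒞 hchain hdisj
  set v0 : Fin n := ⟨0, by omega⟩ with hv0
  set 𝒞' : Set (List (Fin n)) := {Ch | Ch ∈ 𝒞 ∧ Ch ≠ []} with h𝒞'
  have hinj : Set.InjOn (fun Ch => Ch.head?) 𝒞' := by
    intro C1 h1 C2 h2 he
    by_contra hne
    obtain ⟨x, hx⟩ : ∃ x, C1.head? = some x := by
      cases C1 with
      | nil => exact absurd rfl h1.2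
      | cons a t => exact ⟨a, rfl⟩
    have hx1 : x ∈ C1 := List.mem_of_mem_head? (by rw [hx]; rfl)
    have hx2 : x ∈ C2 := by
      apply List.mem_of_mem_head?
      have : C2.head? = some x := by
        have he' : C1.head? = C2.head? := he
        rw [← he']; exact hx
      rw [this]; rfl
    exact hdisj C1 h1.1 C2 h2.1 hne x hx1 hx2
  have hfin : 𝒞'.Finite := Set.Finite.of_finite_image (Set.toFinite _) hinj
  set 𝒞fin := hfin.toFinset with h𝒞fin
  set Hfin : Finset (Edge n) := 𝒞fin.biUnion
    (fun Ch => (LS.S4 Ch.length).image fun p => (Ch.getD p.1 v0, Ch.getD p.2 v0)) with hHfin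
  refine ⟨↑Hfin, ?_, ?_, ?_⟩
  · -- H ⊆ TCset E
    intro e he
    rw [Finset.mem_coe, hHfin, Finset.mem_biUnion] at he
    obtain ⟨Ch, hChf, hE⟩ := he
    rw [h𝒞fin, Set.Finite.mem_toFinset] at hChf
    obtain ⟨hCh𝒞, hChne⟩ := hChf
    obtain ⟨p, hp, rfl⟩ := Finset.mem_image.mp hE
    obtain ⟨h12, h2len⟩ := LS.S4_mem_bounds _ p hp
    have h1len : p.1 < Ch.length := lt_trans h12 h2len
    show TCrel E _ _
    simp only
    rw [List.getD_eq_getElem _ _ h1len, List.getD_eq_getElem _ _ h2len]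
    have := LS.chain_TCrel hDAG (hchain Ch hCh𝒞) h12 h2len
    simpa [List.get_eq_getElem] using this
  · -- cardinality
    rw [Set.ncard_coe_finset]
    have hcard : Hfin.card ≤ 160 * n * (1 + logStar (n:ℝ)) := by
      rw [hHfin]
      refine le_trans Finset.card_biUnion_le ?_
      have hterm : ∀ Ch ∈ 𝒞fin,
          ((LS.S4 Ch.length).image fun p => (Ch.getD p.1 v0, Ch.getD p.2 v0)).card
            ≤ 160 * (1 + logStar (n:ℝ)) * Ch.length := by
        intro Ch hCh
        rw [h𝒞fin, Set.Finite.mem_toFinset] at hCh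
        have hne := hCh.2
        have hlen1 : 1 ≤ Ch.length := by
          cases Ch with
          | nil => exact absurd rfl hne
          | cons a t => simp
        have hlenn : Ch.length ≤ n := by
          have := ((hchain Ch hCh.1).1).length_le_card
          simpa [Fintype.card_fin] using this
        have hG : LS.G Ch.length ≤ logStar (n:ℝ) := by
          refine le_trans (LS.G_le_logStar Ch.length) ?_
          apply LS.logStar_mono
          · exact_mod_cast hlen1
          · exact_mod_cast hlenn
        calc ((LS.S4 Ch.length).image
              fun p => (Ch.getD p.1 v0, Ch.getD p.2 v0)).card
            ≤ (LS.S4 Ch.length).card := Finset.card_image_le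
          _ ≤ 160 * Ch.length * (1 + LS.G Ch.length) := LS.S4_card _
          _ ≤ 160 * Ch.length * (1 + logStar (n:ℝ)) := by
              apply Nat.mul_le_mul_left; omega
          _ = 160 * (1 + logStar (n:ℝ)) * Ch.length := by ring
      refine le_trans (Finset.sum_le_sum hterm) ?_
      rw [← Finset.mul_sum]
      have hsumlen : (∑ Ch ∈ 𝒞fin, Ch.length) ≤ n := by
        have hdisjf : ∀ C1 ∈ 𝒞fin, ∀ C2 ∈ 𝒞fin, C1 ≠ C2 →
            Disjoint C1.toFinset C2.toFinset := by
          intro C1 h1 C2 h2 hne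
          rw [h𝒞fin, Set.Finite.mem_toFinset] at h1 h2
          rw [Finset.disjoint_left]
          intro x hx1 hx2
          rw [List.mem_toFinset] at hx1 hx2
          exact hdisj C1 h1.1 C2 h2.1 hne x hx1 hx2
        calc (∑ Ch ∈ 𝒞fin, Ch.length) = ∑ Ch ∈ 𝒞fin, Ch.toFinset.card := by
              apply Finset.sum_congr rfl
              intro Ch hCh
              rw [h𝒞fin, Set.Finite.mem_toFinset] at hCh
              exact (List.toFinset_card_of_nodup ((hchain Ch hCh.1).1)).symm
          _ = (𝒞fin.biUnion (fun Ch => Ch.toFinset)).card :=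
              (Finset.card_biUnion hdisjf).symm
          _ ≤ Finset.univ.card := Finset.card_le_univ _
          _ = n := by simp
      calc 160 * (1 + logStar (n:ℝ)) * (∑ Ch ∈ 𝒞fin, Ch.length)
          ≤ 160 * (1 + logStar (n:ℝ)) * n := by
            apply Nat.mul_le_mul_left; exact hsumlen
        _ = 160 * n * (1 + logStar (n:ℝ)) := by ring
    calc (Hfin.card : ℝ) ≤ ((160 * n * (1 + logStar (n:ℝ)) : ℕ) : ℝ) := Nat.cast_le.mpr hcard
      _ = 160 * n * (1 + logStar (n:ℝ)) := by push_cast; ring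
  · -- hop bound
    intro Ch hCh i j hij u v hu hv
    obtain ⟨hjlen, hvj⟩ := List.getElem?_eq_some_iff.mp hv
    obtain ⟨hilen, hui⟩ := List.getElem?_eq_some_iff.mp hu
    obtain ⟨l, hc, hsort, hh, hl, hlen5⟩ := LS.S4_hop Ch.length i j hij hjlen
    have hmemlen : ∀ x ∈ l, x < Ch.length := fun x hx =>
      lt_of_le_of_lt (LS.sorted_le_getLast l hsort j hl x hx) hjlen
    have hChfin : Ch ∈ 𝒞fin := by
      rw [h𝒞fin, Set.Finite.mem_toFinset]
      refine ⟨hCh, ?_⟩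
      intro h
      rw [h] at hjlen
      simp at hjlen
    have hChnd : Ch.Nodup := (hchain Ch hCh).1
    have hpath : IsPathFromTo (E ∪ ↑Hfin) u v (l.map fun a => Ch.getD a v0) := by
      refine ⟨⟨?_, ?_⟩, ?_, ?_⟩
      · -- nodup
        refine List.Nodup.map_on ?_ hsort.nodup
        intro x hx y hy hfe
        have hxl := hmemlen x hx
        have hyl := hmemlen y hy
        rw [List.getD_eq_getElem _ _ hxl, List.getD_eq_getElem _ _ hyl] at hfe
        have := (hChnd.get_inj_iff (i := ⟨x, hxl⟩) (j := ⟨y, hyl⟩)).mp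
          (by simpa [List.get_eq_getElem] using hfe)
        exact congrArg Fin.val this
      · -- chain
        change List.IsChain _ _; rw [List.isChain_map]
        refine List.IsChain.imp ?_ hc
        intro a c hac
        apply Set.mem_union_right
        rw [Finset.mem_coe, hHfin, Finset.mem_biUnion]
        exact ⟨Ch, hChfin, Finset.mem_image.mpr ⟨(a, c), hac, rfl⟩⟩
      · rw [List.head?_map, hh]
        simp only [Option.map_some]
        rw [List.getD_eq_getElem _ _ hilen, hui]
      · rw [List.getLast?_map, hl]
        simp only [Option.map_some]
        rw [List.getD_eq_getElem _ _ hjlen, hvj]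
    have hlpos : 1 ≤ l.length := by
      cases l with
      | nil => simp at hh
      | cons a t => simp
    have hk : (l.map fun a => Ch.getD a v0).length = (l.length - 1) + 1 := by
      simp only [List.length_map]; omega
    have hle := LS.hdist_le_of_path hpath (l.length - 1) hk
    refine le_trans hle ?_
    have h4 : l.length - 1 ≤ 4 := by omega
    exact_mod_cast h4
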